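/- Let V be a finite set partitioned into sets V_1,...,V_m of equal size n, let P be a stochastic matrix on V, and let h ≥ 0. For each j, define the averaged measure ψ_j(·) = (1/n)·Σ_{y∈V_j} P^h(y,·), and let ρ_1,...,ρ_m be probability measures with ρ_j supported on V_j. Then Σ_{j=1}^m (1/m)·‖ψ_j − ρ_j‖_TV ≤ ‖(1/m)·Σ_{j=1}^m ψ_j − (1/m)·Σ_{j=1}^m ρ_j‖_TV + (1/m)·Σ_{j=1}^m ψ_j(V \ V_j). -/

import Mathlib

open Finset

/-- Deterministic inequality comparing community-wise distances with the global distance plus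
the escape probabilities (Lemma 34 of the paper). -/
theorem community_tv_inequality (V : Type*) [Fintype V] [DecidableEq V]
    (m n : ℕ) (hm : 1 ≤ m) (hn : 1 ≤ n)
    (Vs : Fin m → Finset V)
    (hdisj : ∀ i j, i ≠ j → Disjoint (Vs i) (Vs j))
    (hcover : Finset.univ = Finset.univ.biUnion Vs)
    (hcard : ∀ i, (Vs i).card = n)
    (P : Matrix V V ℝ) (hP0 : ∀ x y, 0 ≤ P x y) (hP1 : ∀ x, ∑ y : V, P x y = 1)
    (h : ℕ)
    (ρ : Fin m → V → ℝ) (hρ0 : ∀ i x, 0 ≤ ρ i x) (hρ1 : ∀ i, ∑ x : V, ρ i x = 1)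
    (hsupp : ∀ i x, x ∉ Vs i → ρ i x = 0) :
    ∑ j : Fin m, (1 / (m : ℝ)) *
        ((1 / 2) * ∑ y : V, |(1 / (n : ℝ)) * ∑ x ∈ Vs j, (P ^ h) x y - ρ j y|) ≤
      (1 / 2) * ∑ y : V,
          |(1 / (m : ℝ)) * ∑ j : Fin m, (1 / (n : ℝ)) * ∑ x ∈ Vs j, (P ^ h) x y -
            (1 / (m : ℝ)) * ∑ j : Fin m, ρ j y| +
        (1 / (m : ℝ)) * ∑ j : Fin m,
          ∑ y ∈ Finset.univ \ Vs j, (1 / (n : ℝ)) * ∑ x ∈ Vs j, (P ^ h) x y := by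
  have hm' : (0:ℝ) < m := by exact_mod_cast hm
  set ψ : Fin m → V → ℝ := fun j y => (1 / (n : ℝ)) * ∑ x ∈ Vs j, (P ^ h) x y with hψdef
  have hPow : ∀ (k : ℕ) (x y : V), 0 ≤ (P ^ k) x y := by
    intro k
    induction k with
    | zero =>
      intro x y
      simp only [pow_zero, Matrix.one_apply]
      split <;> norm_num
    | succ k ih =>
      intro x y
      rw [pow_succ]
      exact Finset.sum_nonneg fun z _ => mul_nonneg (ih x z) (hP0 z y)
  have hψ0 : ∀ j y, 0 ≤ ψ j y := by
    intro j y
    exact mul_nonneg (by positivity) (Finset.sum_nonneg fun x _ => hPow h x y)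
  -- pointwise key inequality
  have key : ∀ y : V, ∑ j : Fin m, |ψ j y - ρ j y| ≤
      |∑ j : Fin m, (ψ j y - ρ j y)| +
        2 * ∑ j ∈ Finset.univ.filter (fun j => y ∉ Vs j), ψ j y := by
    intro y
    obtain ⟨j0, -, hj0⟩ : ∃ j ∈ (Finset.univ : Finset (Fin m)), y ∈ Vs j := by
      have : y ∈ Finset.univ.biUnion Vs := by rw [← hcover]; exact Finset.mem_univ y
      exact Finset.mem_biUnion.mp this
    have hnot : ∀ j, j ≠ j0 → y ∉ Vs j := by
      intro j hj hy
      exact (Finset.disjoint_left.mp (hdisj j j0 hj)) hy hj0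
    have hfilt : Finset.univ.filter (fun j => y ∉ Vs j) = Finset.univ.erase j0 := by
      ext j
      simp only [Finset.mem_filter, Finset.mem_univ, true_and, Finset.mem_erase, and_true]
      constructor
      · intro hy; intro hj; exact hy (hj ▸ hj0)
      · exact hnot j
    rw [hfilt]
    have hρ0' : ∀ j ∈ Finset.univ.erase j0, ρ j y = 0 := fun j hj =>
      hsupp j y (hnot j (Finset.mem_erase.mp hj).1)
    set T : ℝ := ∑ j ∈ Finset.univ.erase j0, ψ j y with hT
    have hT0 : 0 ≤ T := Finset.sum_nonneg fun j _ => hψ0 j y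
    have hsum1 : ∑ j : Fin m, |ψ j y - ρ j y| = |ψ j0 y - ρ j0 y| + T := by
      rw [← Finset.add_sum_erase _ _ (Finset.mem_univ j0)]
      congr 1
      refine Finset.sum_congr rfl fun j hj => ?_
      rw [hρ0' j hj, sub_zero, abs_of_nonneg (hψ0 j y)]
    have hsum2 : ∑ j : Fin m, (ψ j y - ρ j y) = (ψ j0 y - ρ j0 y) + T := by
      rw [← Finset.add_sum_erase _ _ (Finset.mem_univ j0)]
      congr 1
      refine Finset.sum_congr rfl fun j hj => ?_
      rw [hρ0' j hj, sub_zero]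
    rw [hsum1, hsum2]
    have : |ψ j0 y - ρ j0 y| ≤ |(ψ j0 y - ρ j0 y) + T| + T := by
      calc |ψ j0 y - ρ j0 y| = |(ψ j0 y - ρ j0 y) + T - T| := by congr 1; ring
        _ ≤ |(ψ j0 y - ρ j0 y) + T| + |T| := abs_sub _ _
        _ = |(ψ j0 y - ρ j0 y) + T| + T := by rw [abs_of_nonneg hT0]
    linarith
  -- rewrite both sides
  have hswap : ∑ j : Fin m, ∑ y ∈ Finset.univ \ Vs j, ψ j y =
      ∑ y : V, ∑ j ∈ Finset.univ.filter (fun j => y ∉ Vs j), ψ j y := by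
    have h1 : ∀ j : Fin m, ∑ y ∈ Finset.univ \ Vs j, ψ j y =
        ∑ y : V, if y ∉ Vs j then ψ j y else 0 := by
      intro j
      rw [Finset.sum_ite, Finset.sum_const_zero, add_zero]
      congr 1
      ext y; simp
    simp_rw [h1]
    rw [Finset.sum_comm]
    refine Finset.sum_congr rfl fun y _ => ?_
    rw [Finset.sum_filter]
  calc ∑ j : Fin m, (1 / (m : ℝ)) * ((1 / 2) * ∑ y : V, |ψ j y - ρ j y|)
      = (1 / (2 * (m:ℝ))) * ∑ y : V, ∑ j : Fin m, |ψ j y - ρ j y| := by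
        have hc : ∑ y : V, ∑ j : Fin m, |ψ j y - ρ j y| =
            ∑ j : Fin m, ∑ y : V, |ψ j y - ρ j y| := Finset.sum_comm
        rw [hc, Finset.mul_sum]
        refine Finset.sum_congr rfl fun j _ => ?_
        ring
    _ ≤ (1 / (2 * (m:ℝ))) * ∑ y : V,
          (|∑ j : Fin m, (ψ j y - ρ j y)| +
            2 * ∑ j ∈ Finset.univ.filter (fun j => y ∉ Vs j), ψ j y) := by
        apply mul_le_mul_of_nonneg_left _ (by positivity)
        exact Finset.sum_le_sum fun y _ => key y
    _ = (1 / 2) * ∑ y : V, |(1 / (m : ℝ)) * ∑ j : Fin m, ψ j y -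
            (1 / (m : ℝ)) * ∑ j : Fin m, ρ j y| +
          (1 / (m : ℝ)) * ∑ j : Fin m, ∑ y ∈ Finset.univ \ Vs j, ψ j y := by
        rw [hswap, Finset.sum_add_distrib, mul_add]
        congr 1
        · rw [Finset.mul_sum, Finset.mul_sum]
          refine Finset.sum_congr rfl fun y _ => ?_
          have e : (1/(m:ℝ)) * ∑ j : Fin m, ψ j y - (1/(m:ℝ)) * ∑ j : Fin m, ρ j y =
              (1/(m:ℝ)) * ∑ j : Fin m, (ψ j y - ρ j y) := by
            rw [Finset.sum_sub_distrib]; ring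
          rw [e, abs_mul, abs_of_nonneg (by positivity : (0:ℝ) ≤ 1/(m:ℝ))]
          ring
        · rw [Finset.mul_sum, Finset.mul_sum]
          refine Finset.sum_congr rfl fun y _ => ?_
          ring
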